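/- Let J be a JB*-algebra and G : J → J* a continuous generalized Jordan derivation with witness ξ = G**(1) ∈ J***. Let V_G(a,b) := G(a)(b). If p is a projection in J** and b ∈ J** satisfies p ⊥ b, then G**(p)(b*) = 0, where G** is the weak*-continuous extension of G. -/

import Mathlib

/-- The topological dual of a seminormed space `E` (Mathlib's former `NormedSpace.Dual`). -/
abbrev NormedSpace.Dual (𝕜 : Type*) [NontriviallyNormedField 𝕜] (E : Type*)
    [SeminormedAddCommGroup E] [NormedSpace 𝕜 E] : Type _ := E →L[𝕜] 𝕜

open NormedSpace

/-- The triple product `{x,y,z} = (x∘y*)∘z + (z∘y*)∘x − (x∘z)∘y*` of a JB*-algebra. -/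
noncomputable def tp {J : Type*} [NormedAddCommGroup J] [NormedSpace ℂ J]
    (jmul : J →L[ℂ] J →L[ℂ] J) (st : J → J) (x y z : J) : J :=
  jmul (jmul x (st y)) z + jmul (jmul z (st y)) x - jmul (jmul x z) (st y)

/-- let `J` be a JB*-algebra, `G : J → J*` a continuous generalized Jordan
derivation, `G** : J** → J* ⊆ J***` its (bidual) extension, with witness
`ξ = G**(1) ∈ J***`, satisfying the generalized Jordan derivation identity on `J**`
(with respect to the Arens extension `m2` of the product and the extension `st2` of the
involution).  If `p ∈ J**` is a projection and `b ∈ J**` satisfies `p ⊥ b`, then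
`G**(p)(b*) = 0`. -/
theorem stmt14 {J : Type*} [NormedAddCommGroup J] [NormedSpace ℂ J] [CompleteSpace J]
    (jmul : J →L[ℂ] J →L[ℂ] J)
    (hcomm : ∀ a b : J, jmul a b = jmul b a)
    (hjordan : ∀ a b : J, jmul (jmul a b) (jmul a a) = jmul a (jmul b (jmul a a)))
    (hnorm : ∀ a b : J, ‖jmul a b‖ ≤ ‖a‖ * ‖b‖)
    (st : J → J)
    (hst_inv : ∀ a : J, st (st a) = a)
    (hst_add : ∀ a b : J, st (a + b) = st a + st b)
    (hst_smul : ∀ (r : ℂ) (a : J), st (r • a) = (starRingEnd ℂ r) • st a)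
    (hst_mul : ∀ a b : J, st (jmul a b) = jmul (st a) (st b))
    (hst_norm : ∀ a : J, ‖st a‖ = ‖a‖)
    (hcstar : ∀ a : J,
      ‖jmul (jmul a (st a)) a + jmul (jmul a (st a)) a - jmul (jmul a a) (st a)‖ = ‖a‖ ^ 3)
    -- the Arens product `m2` on the bidual `J**`, extending the product of `J`:
    (m2 : Dual ℂ (Dual ℂ J) →L[ℂ] Dual ℂ (Dual ℂ J) →L[ℂ] Dual ℂ (Dual ℂ J))
    (hm2comm : ∀ x y : Dual ℂ (Dual ℂ J), m2 x y = m2 y x)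
    (hm2jordan : ∀ x y : Dual ℂ (Dual ℂ J),
      m2 (m2 x y) (m2 x x) = m2 x (m2 y (m2 x x)))
    (hm2ext : ∀ a b : J,
      m2 (inclusionInDoubleDual ℂ J a) (inclusionInDoubleDual ℂ J b) =
        inclusionInDoubleDual ℂ J (jmul a b))
    -- the involution on `J**` extending that of `J`:
    (st2 : Dual ℂ (Dual ℂ J) → Dual ℂ (Dual ℂ J))
    (hst2ext : ∀ a : J, st2 (inclusionInDoubleDual ℂ J a) = inclusionInDoubleDual ℂ J (st a))
    (hst2inv : ∀ x, st2 (st2 x) = x)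
    (hst2add : ∀ x y, st2 (x + y) = st2 x + st2 y)
    (hst2mul : ∀ x y, st2 (m2 x y) = m2 (st2 x) (st2 y))
    -- the unit of the JBW*-algebra `J**`:
    (e2 : Dual ℂ (Dual ℂ J)) (he2 : ∀ x, m2 e2 x = x)
    -- the generalized Jordan derivation `G` with witness `ξ ∈ J***`:
    (G : J →L[ℂ] Dual ℂ J)
    (ξ : Dual ℂ (Dual ℂ (Dual ℂ J)))
    (hGgen : ∀ a b : J,
      inclusionInDoubleDual ℂ (Dual ℂ J) (G (jmul a b)) =
        inclusionInDoubleDual ℂ (Dual ℂ J) ((G a).comp (jmul b)) +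
          inclusionInDoubleDual ℂ (Dual ℂ J) ((G b).comp (jmul a)) -
            ((ξ.comp (m2 (inclusionInDoubleDual ℂ J a))).comp
                (m2 (inclusionInDoubleDual ℂ J b)) +
              (ξ.comp (m2 (inclusionInDoubleDual ℂ J b))).comp
                (m2 (inclusionInDoubleDual ℂ J a)) -
              ξ.comp (m2 (inclusionInDoubleDual ℂ J (jmul a b)))))
    -- the extension `G** : J** → J* ⊆ J***` of `G`:
    (G2 : Dual ℂ (Dual ℂ J) →ₗ[ℂ] Dual ℂ J)
    (hG2ext : ∀ a : J, G2 (inclusionInDoubleDual ℂ J a) = G a)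
    (hξ : ξ = inclusionInDoubleDual ℂ (Dual ℂ J) (G2 e2))
    (hG2gen : ∀ x y : Dual ℂ (Dual ℂ J),
      inclusionInDoubleDual ℂ (Dual ℂ J) (G2 (m2 x y)) =
        (inclusionInDoubleDual ℂ (Dual ℂ J) (G2 x)).comp (m2 y) +
          (inclusionInDoubleDual ℂ (Dual ℂ J) (G2 y)).comp (m2 x) -
            ((ξ.comp (m2 x)).comp (m2 y) + (ξ.comp (m2 y)).comp (m2 x) -
              ξ.comp (m2 (m2 x y))))
    -- a projection `p` in `J**` and `b ∈ J**` orthogonal to it: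
    (p b : Dual ℂ (Dual ℂ J))
    (hp_idem : m2 p p = p) (hp_sa : st2 p = p)
    (horth : ∀ c : Dual ℂ (Dual ℂ J), tp m2 st2 p b c = 0) :
    st2 b (G2 p) = 0 := by
  have h1 : m2 p (st2 b) = 0 := by
    have h := horth e2
    unfold tp at h
    rw [hm2comm (m2 p (st2 b)) e2, he2, he2, hm2comm (st2 b) p,
      hm2comm p e2, he2] at h
    simpa using h
  have h2 := hG2gen p p
  rw [hp_idem] at h2
  have h3 := congrArg (fun f : Dual ℂ (Dual ℂ (Dual ℂ J)) => f (st2 b)) h2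
  simp only [ContinuousLinearMap.comp_apply, ContinuousLinearMap.add_apply,
    ContinuousLinearMap.sub_apply, h1, map_zero, dual_def] at h3
  simpa using h3
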